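/- Let R be a commutative ring, S a multiplicative subset of R, and A, B R-modules. If A ⊕ B is u-S-pseudo-projective, then A is u-S-projective relative to B; concretely, for every submodule K of B there exists s ∈ S such that for every R-homomorphism f : A → B/K there is an R-homomorphism h : A → B with s·f = π_K ∘ h, where π_K : B → B/K is the quotient map. Symmetrically, B is u-S-projective relative to A. -/
import Mathlib


/-!  Definitions for uniformly-S-pseudo-projective modules
(M. Adarbeh, M. Saleh, "Uniformly-S-pseudo-projective modules"). -/

universe u v w

/-- `S` is a multiplicative subset of the commutative ring `R`:
`1 ∈ S`, `0 ∉ S`, and `S` is closed under multiplication. -/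
def IsMultSubset {R : Type u} [CommRing R] (S : Set R) : Prop :=
  1 ∈ S ∧ (0 : R) ∉ S ∧ ∀ ⦃a b : R⦄, a ∈ S → b ∈ S → a * b ∈ S

/-- An `R`-module `T` is `u`-`S`-torsion if some `s ∈ S` annihilates it. -/
def IsUSTorsion {R : Type u} [CommRing R] (S : Set R) (T : Type v) [AddCommGroup T]
    [Module R T] : Prop :=
  ∃ s ∈ S, ∀ t : T, s • t = 0

/-- `f` is a `u`-`S`-monomorphism: its kernel is `u`-`S`-torsion. -/
def IsUSMono {R : Type u} [CommRing R] (S : Set R) {M : Type v} {N : Type w}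
    [AddCommGroup M] [Module R M] [AddCommGroup N] [Module R N] (f : M →ₗ[R] N) : Prop :=
  ∃ s ∈ S, ∀ m ∈ LinearMap.ker f, s • m = (0 : M)

/-- `f` is a `u`-`S`-epimorphism: its cokernel is `u`-`S`-torsion. -/
def IsUSEpi {R : Type u} [CommRing R] (S : Set R) {M : Type v} {N : Type w}
    [AddCommGroup M] [Module R M] [AddCommGroup N] [Module R N] (f : M →ₗ[R] N) : Prop :=
  ∃ s ∈ S, ∀ n : N, s • n ∈ LinearMap.range f

/-- `f` is a `u`-`S`-isomorphism: both a `u`-`S`-monomorphism and a `u`-`S`-epimorphism. -/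
def IsUSIso {R : Type u} [CommRing R] (S : Set R) {M : Type v} {N : Type w}
    [AddCommGroup M] [Module R M] [AddCommGroup N] [Module R N] (f : M →ₗ[R] N) : Prop :=
  IsUSMono S f ∧ IsUSEpi S f

/-- `P` is `u`-`S`-pseudo-projective: for every submodule `K` of `P` there is `s ∈ S` such that
every `u`-`S`-epimorphism `f : P → P/K` satisfies `s • f = π_K ∘ g` for some endomorphism
`g` of `P`. -/
def IsUSPseudoProjective {R : Type u} [CommRing R] (S : Set R) (P : Type v)
    [AddCommGroup P] [Module R P] : Prop :=
  ∀ K : Submodule R P, ∃ s ∈ S, ∀ f : P →ₗ[R] P ⧸ K, IsUSEpi S f →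
    ∃ g : P →ₗ[R] P, s • f = K.mkQ.comp g

/-- `M` is `u`-`S`-quasi-projective. -/
def IsUSQuasiProjective {R : Type u} [CommRing R] (S : Set R) (M : Type v)
    [AddCommGroup M] [Module R M] : Prop :=
  ∀ K : Submodule R M, ∃ s ∈ S, ∀ f : M →ₗ[R] M ⧸ K,
    ∃ g : M →ₗ[R] M, s • f = K.mkQ.comp g

/-- `Q` is `u`-`S`-projective (test modules in `Type v₁`). -/
def IsUSProjective.{u₁, v₁, w₁} {R : Type u₁} [CommRing R] (S : Set R) (Q : Type w₁)
    [AddCommGroup Q] [Module R Q] : Prop :=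
  ∀ (B C : Type v₁) [AddCommGroup B] [AddCommGroup C] [Module R B] [Module R C]
    (g : B →ₗ[R] C), IsUSEpi S g →
      ∃ s ∈ S, ∀ h : Q →ₗ[R] C, ∃ h' : Q →ₗ[R] B, s • h = g.comp h'

/-- `M` is `u`-`S`-injective (test modules in `Type v₁`). -/
def IsUSInjective.{u₁, v₁, w₁} {R : Type u₁} [CommRing R] (S : Set R) (M : Type w₁)
    [AddCommGroup M] [Module R M] : Prop :=
  ∀ (A B : Type v₁) [AddCommGroup A] [AddCommGroup B] [Module R A] [Module R B]
    (f : A →ₗ[R] B), IsUSMono S f →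
      ∃ s ∈ S, ∀ h : A →ₗ[R] M, ∃ h' : B →ₗ[R] M, s • h = h'.comp f

/-- `E` is `u`-`S`-pseudo-injective. -/
def IsUSPseudoInjective {R : Type u} [CommRing R] (S : Set R) (E : Type v)
    [AddCommGroup E] [Module R E] : Prop :=
  ∀ K : Submodule R E, ∃ s ∈ S, ∀ f : ↥K →ₗ[R] E, IsUSMono S f →
    ∃ g : E →ₗ[R] E, g.comp K.subtype = s • f

/-- The sequence `0 → A →f B →g C → 0` is short `u`-`S`-exact. -/
def IsShortUSExact {R : Type u} [CommRing R] (S : Set R) {A B C : Type v}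
    [AddCommGroup A] [Module R A] [AddCommGroup B] [Module R B] [AddCommGroup C] [Module R C]
    (f : A →ₗ[R] B) (g : B →ₗ[R] C) : Prop :=
  IsUSMono S f ∧ IsUSEpi S g ∧
    ∃ s ∈ S, (∀ x ∈ LinearMap.ker g, s • x ∈ LinearMap.range f) ∧
      (∀ x ∈ LinearMap.range f, s • x ∈ LinearMap.ker g)

/-- The short `u`-`S`-exact sequence `0 → A →f B →g C → 0` is `u`-`S`-split:
some multiple `s • 1_A` of the identity factors back through `f`. -/
def IsUSSplitSeq {R : Type u} [CommRing R] (S : Set R) {A B : Type v}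
    [AddCommGroup A] [Module R A] [AddCommGroup B] [Module R B] (f : A →ₗ[R] B) : Prop :=
  ∃ s ∈ S, ∃ f' : B →ₗ[R] A, f'.comp f = s • (LinearMap.id : A →ₗ[R] A)

/-- `M` is a `u`-`S`-semisimple module (test sequences with modules in `Type v₁`). -/
def IsUSSemisimpleModule.{u₁, v₁} {R : Type u₁} [CommRing R] (S : Set R) (M : Type v₁)
    [AddCommGroup M] [Module R M] : Prop :=
  ∀ (A C : Type v₁) [AddCommGroup A] [AddCommGroup C] [Module R A] [Module R C]
    (f : A →ₗ[R] M) (g : M →ₗ[R] C), IsShortUSExact S f g → IsUSSplitSeq S f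

/-- `R` is a `u`-`S`-semisimple ring: every free `R`-module is `u`-`S`-semisimple. -/
def IsUSSemisimpleRing.{u₁, v₁} {R : Type u₁} [CommRing R] (S : Set R) : Prop :=
  ∀ (F : Type v₁) [AddCommGroup F] [Module R F], Module.Free R F →
    IsUSSemisimpleModule.{u₁, v₁} S F

/-- A submodule `N` of `M` is a `u`-`S`-direct summand of `M` if there is an `R`-module `N'`
and a `u`-`S`-isomorphism between `M` and `N ⊕ N'`. -/
def IsUSDirectSummand {R : Type u} [CommRing R] (S : Set R) {M : Type v}
    [AddCommGroup M] [Module R M] (N : Submodule R M) : Prop :=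
  ∃ (N' : ModuleCat.{v} R) (h : M →ₗ[R] (↥N × ↥N')), IsUSIso S h

/-- `A` is `u`-`S`-projective relative to `B`. -/
def IsUSProjectiveRel {R : Type u} [CommRing R] (S : Set R) (A : Type v) (B : Type w)
    [AddCommGroup A] [Module R A] [AddCommGroup B] [Module R B] : Prop :=
  ∀ K : Submodule R B, ∃ s ∈ S, ∀ f : A →ₗ[R] B ⧸ K,
    ∃ h : A →ₗ[R] B, s • f = K.mkQ.comp h


private lemma transfer_uSPseudoProjective {R : Type u} [CommRing R] {S : Set R}
    {M N : Type v} [AddCommGroup M] [Module R M] [AddCommGroup N] [Module R N]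
    (e : M ≃ₗ[R] N) (h : IsUSPseudoProjective S M) : IsUSPseudoProjective S N := by
  intro K
  have hmap : (K.map (e.symm : N →ₗ[R] M)).map (e : M →ₗ[R] N) = K := by
    ext x
    simp [Submodule.mem_map]
  set K' : Submodule R M := K.map (e.symm : N →ₗ[R] M) with hK'
  obtain ⟨s, hsS, hs⟩ := h K'
  refine ⟨s, hsS, fun f hf => ?_⟩
  let qe : (M ⧸ K') ≃ₗ[R] (N ⧸ K) := Submodule.Quotient.equiv K' K e hmap
  let f' : M →ₗ[R] M ⧸ K' := qe.symm.toLinearMap ∘ₗ f ∘ₗ (e : M →ₗ[R] N)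
  have hf' : IsUSEpi S f' := by
    obtain ⟨t, htS, ht⟩ := hf
    refine ⟨t, htS, fun n => ?_⟩
    obtain ⟨x, hx⟩ := ht (qe n)
    refine ⟨e.symm x, ?_⟩
    have : qe (f' (e.symm x)) = qe (t • n) := by
      simp [f', map_smul, hx]
    exact (qe.injective this)
  obtain ⟨g', hg'⟩ := hs f' hf'
  refine ⟨(e : M →ₗ[R] N) ∘ₗ g' ∘ₗ (e.symm : N →ₗ[R] M), ?_⟩
  ext n
  have h1 : (s • f') (e.symm n) = K'.mkQ (g' (e.symm n)) := by rw [hg']; rfl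
  have h2 : qe ((s • f') (e.symm n)) = qe (K'.mkQ (g' (e.symm n))) := by rw [h1]
  have h3 : qe ((s • f') (e.symm n)) = s • f n := by
    simp [f', map_smul]
  have h4 : qe (K'.mkQ (g' (e.symm n))) = K.mkQ (e (g' (e.symm n))) := by
    simp [qe, Submodule.Quotient.equiv, Submodule.mapQ_apply]
  simp only [LinearMap.smul_apply, LinearMap.comp_apply, LinearEquiv.coe_coe]
  rw [← h3, h2, h4]

private lemma helper_uSProjectiveRel {R : Type u} [CommRing R] {S : Set R} (hS : IsMultSubset S)
    {A B : Type v} [AddCommGroup A] [Module R A] [AddCommGroup B] [Module R B]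
    (hAB : IsUSPseudoProjective S (A × B)) : IsUSProjectiveRel S A B := by
  intro K
  set q : (A × B) →ₗ[R] A × (B ⧸ K) := LinearMap.prodMap LinearMap.id K.mkQ with hq
  set L : Submodule R (A × B) := LinearMap.ker q with hL
  obtain ⟨s, hsS, hs⟩ := hAB L
  refine ⟨s, hsS, fun f => ?_⟩
  have hq_surj : Function.Surjective q := by
    rintro ⟨a, c⟩
    obtain ⟨b, rfl⟩ := K.mkQ_surjective c
    exact ⟨(a, b), rfl⟩
  let ψ : ((A × B) ⧸ L) →ₗ[R] A × (B ⧸ K) := L.liftQ q le_rfl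
  have hψmk : ∀ x, ψ (L.mkQ x) = q x := fun x => rfl
  have hψbij : Function.Bijective ψ := by
    constructor
    · rw [← LinearMap.ker_eq_bot]
      exact Submodule.ker_liftQ_eq_bot _ _ _ le_rfl
    · intro y
      obtain ⟨x, hx⟩ := hq_surj y
      exact ⟨L.mkQ x, hx⟩
  let e : ((A × B) ⧸ L) ≃ₗ[R] A × (B ⧸ K) := LinearEquiv.ofBijective ψ hψbij
  let ft : (A × B) →ₗ[R] A × (B ⧸ K) :=
    LinearMap.prod (LinearMap.fst R A B)
      (K.mkQ ∘ₗ LinearMap.snd R A B + f ∘ₗ LinearMap.fst R A B)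
  let F : (A × B) →ₗ[R] (A × B) ⧸ L := e.symm.toLinearMap ∘ₗ ft
  have hF_epi : IsUSEpi S F := by
    refine ⟨1, hS.1, fun n => ?_⟩
    have hft : Function.Surjective ft := by
      rintro ⟨a, c⟩
      obtain ⟨b, hb⟩ := K.mkQ_surjective (c - f a)
      refine ⟨(a, b), ?_⟩
      simp [ft, hb]
    obtain ⟨x, hx⟩ := hft (e n)
    refine ⟨x, ?_⟩
    have : F x = n := by
      simp only [F, LinearMap.comp_apply, LinearEquiv.coe_coe, hx]
      exact e.symm_apply_apply n
    rw [this, one_smul]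
  obtain ⟨g, hg⟩ := hs F hF_epi
  refine ⟨(LinearMap.snd R A B) ∘ₗ g ∘ₗ LinearMap.inl R A B, ?_⟩
  ext a
  have h1 : (s • F) (a, 0) = L.mkQ (g (a, 0)) := by rw [hg]; rfl
  have h2 : e ((s • F) (a, 0)) = e (L.mkQ (g (a, 0))) := by rw [h1]
  have h3 : e ((s • F) (a, 0)) = (s • a, s • f a) := by
    have hFe : e (F (a, 0)) = ft (a, 0) := by
      simp only [F, LinearMap.comp_apply, LinearEquiv.coe_coe]
      exact e.apply_symm_apply _
    have : ft (a, 0) = (a, f a) := by simp [ft]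
    rw [LinearMap.smul_apply, map_smul, hFe, this, Prod.smul_mk]
  have h4 : e (L.mkQ (g (a, 0))) = ((g (a, 0)).1, K.mkQ (g (a, 0)).2) := by
    have : e (L.mkQ (g (a, 0))) = q (g (a, 0)) := hψmk _
    rw [this]; rfl
  have h5 : (s • a, s • f a) = ((g (a, 0)).1, K.mkQ (g (a, 0)).2) := by
    rw [← h3, h2, h4]
  simp only [LinearMap.smul_apply, LinearMap.comp_apply, LinearMap.snd_apply,
    LinearMap.inl_apply]
  exact congrArg Prod.snd h5

/-- If `A ⊕ B` is `u`-`S`-pseudo-projective, then `A` is `u`-`S`-projective relative to `B`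
and `B` is `u`-`S`-projective relative to `A`. -/
theorem uSProjectiveRel_of_prod_uSPseudoProjective
    {R : Type u} [CommRing R] (S : Set R) (hS : IsMultSubset S)
    {A B : Type v} [AddCommGroup A] [Module R A] [AddCommGroup B] [Module R B]
    (hAB : IsUSPseudoProjective S (A × B)) :
    IsUSProjectiveRel S A B ∧ IsUSProjectiveRel S B A := by
  refine ⟨helper_uSProjectiveRel hS hAB, helper_uSProjectiveRel hS ?_⟩
  exact transfer_uSPseudoProjective (LinearEquiv.prodComm R A B) hAB
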